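/- Let X and Y be bounded metric spaces such that: (1) d := diam Y − diam X > 0; (2) there is a partition D_X = {X_i}_{i∈I} of X into nonempty subsets with α(D_X) := inf{ d(X_i, X_j) : i ≠ j } > 0; (3) there is a covering C_Y = {Y_j}_{j∈J} of Y by nonempty subsets with δ_Y := diam Y − sup_j diam Y_j > 0; (4) the cardinality of J is at most the cardinality of I. Then diam Y − 2·d_GH(X,Y) ≥ min{d, α(D_X), δ_Y} > 0. -/

import Mathlib

open Metric Set
open scoped ENNReal

/-- A correspondence between `X` and `Y`: a relation whose projections are surjective. -/
def IsCorrespondence {X Y : Type*} (R : Set (X × Y)) : Prop :=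
  (∀ x : X, ∃ y : Y, (x, y) ∈ R) ∧ (∀ y : Y, ∃ x : X, (x, y) ∈ R)

/-- The distortion of a relation `R ⊆ X × Y`. -/
noncomputable def corrDistortion {X Y : Type*} [MetricSpace X] [MetricSpace Y]
    (R : Set (X × Y)) : ℝ≥0∞ :=
  ⨆ p ∈ R, ⨆ q ∈ R, ENNReal.ofReal |dist p.1 q.1 - dist p.2 q.2|

/-- The Gromov–Hausdorff distance between (arbitrary) metric spaces:
half the infimum of distortions of correspondences. -/
noncomputable def ghDist (X Y : Type*) [MetricSpace X] [MetricSpace Y] : ℝ≥0∞ :=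
  (⨅ (R : Set (X × Y)) (_ : IsCorrespondence R), corrDistortion R) / 2

/-- the key distance estimate. Here `a` plays the role of `α(D_X) > 0`
(a positive lower bound on distances between distinct parts of the partition `D`),
`b` that of `δ_Y > 0` (so `diam C_j ≤ diam Y − b` for all `j`).
Conclusion: `diam Y − 2·d_GH(X,Y) ≥ min {d, a, b} > 0`. -/
theorem stmt8 {X Y : Type u} [MetricSpace X] [MetricSpace Y] [Nonempty X] [Nonempty Y]
    (hXb : EMetric.diam (Set.univ : Set X) ≠ ⊤)
    (hYb : EMetric.diam (Set.univ : Set Y) ≠ ⊤)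
    (d : ℝ) (hd : d = Metric.diam (Set.univ : Set Y) - Metric.diam (Set.univ : Set X))
    (hdpos : 0 < d)
    {I J : Type u}
    (D : I → Set X) (hDne : ∀ i, (D i).Nonempty) (hDcov : ⋃ i, D i = Set.univ)
    (hDdisj : Pairwise (Function.onFun Disjoint D))
    (a : ℝ) (ha : 0 < a)
    (hα : ∀ i j, i ≠ j → ∀ x ∈ D i, ∀ y ∈ D j, a ≤ dist x y)
    (C : J → Set Y) (hCne : ∀ j, (C j).Nonempty) (hCcov : ⋃ j, C j = Set.univ)
    (b : ℝ) (hb : 0 < b)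
    (hδ : ∀ j, Metric.diam (C j) ≤ Metric.diam (Set.univ : Set Y) - b)
    (hcard : Cardinal.mk J ≤ Cardinal.mk I) :
    2 * ghDist X Y ≤
      ENNReal.ofReal (Metric.diam (Set.univ : Set Y) - min d (min a b)) ∧
    0 < min d (min a b) := by
  have hXbd : Bornology.IsBounded (Set.univ : Set X) :=
    Metric.isBounded_iff_ediam_ne_top.mpr hXb
  have hYbd : Bornology.IsBounded (Set.univ : Set Y) :=
    Metric.isBounded_iff_ediam_ne_top.mpr hYb
  set m := min d (min a b) with hm
  have hmpos : 0 < m := lt_min hdpos (lt_min ha hb)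
  refine ⟨?_, hmpos⟩
  have hmd : m ≤ d := min_le_left _ _
  have hma : m ≤ a := le_trans (min_le_right _ _) (min_le_left _ _)
  have hmb : m ≤ b := le_trans (min_le_right _ _) (min_le_right _ _)
  obtain ⟨f⟩ : Nonempty (J ↪ I) := Cardinal.le_def J I |>.mp hcard
  haveI : Nonempty J := by
    obtain ⟨y⟩ := ‹Nonempty Y›
    have : y ∈ ⋃ j, C j := by rw [hCcov]; trivial
    obtain ⟨j, -⟩ := Set.mem_iUnion.mp this
    exact ⟨j⟩
  set g : I → J := Function.invFun f with hgdef
  have hg : ∀ j, g (f j) = j := Function.leftInverse_invFun f.injective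
  set R : Set (X × Y) := ⋃ i, D i ×ˢ C (g i) with hR
  have hRcorr : IsCorrespondence R := by
    constructor
    · intro x
      have : x ∈ ⋃ i, D i := by rw [hDcov]; trivial
      obtain ⟨i, hi⟩ := Set.mem_iUnion.mp this
      obtain ⟨y, hy⟩ := hCne (g i)
      exact ⟨y, Set.mem_iUnion.mpr ⟨i, hi, hy⟩⟩
    · intro y
      have : y ∈ ⋃ j, C j := by rw [hCcov]; trivial
      obtain ⟨j, hj⟩ := Set.mem_iUnion.mp this
      obtain ⟨x, hx⟩ := hDne (f j)
      refine ⟨x, Set.mem_iUnion.mpr ⟨f j, hx, ?_⟩⟩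
      rw [hg j]; exact hj
  set T := Metric.diam (Set.univ : Set Y) with hT
  have key : ∀ p ∈ R, ∀ q ∈ R, |dist p.1 q.1 - dist p.2 q.2| ≤ T - m := by
    rintro ⟨x, y⟩ hp ⟨x', y'⟩ hq
    obtain ⟨i, hxi, hyi⟩ := Set.mem_iUnion.mp hp
    obtain ⟨i', hxi', hyi'⟩ := Set.mem_iUnion.mp hq
    simp only at hxi hyi hxi' hyi' ⊢
    have hxX : dist x x' ≤ Metric.diam (Set.univ : Set X) :=
      Metric.dist_le_diam_of_mem hXbd trivial trivial
    have hyY : dist y y' ≤ T := Metric.dist_le_diam_of_mem hYbd trivial trivial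
    rw [abs_sub_le_iff]
    constructor
    · -- dist x x' - dist y y' ≤ T - m
      have : dist x x' ≤ T - d := by
        rw [hd] at *; linarith
      have := dist_nonneg (x := y) (y := y')
      linarith
    · -- dist y y' - dist x x' ≤ T - m
      by_cases hii : i = i'
      · subst hii
        have hdy : dist y y' ≤ Metric.diam (C (g i)) :=
          Metric.dist_le_diam_of_mem (hYbd.subset (Set.subset_univ _)) hyi hyi'
        have := hδ (g i)
        have := dist_nonneg (x := x) (y := x')
        linarith
      · have hax : a ≤ dist x x' := hα i i' hii x hxi x' hxi'
        linarith
  have hdist : corrDistortion R ≤ ENNReal.ofReal (T - m) := by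
    rw [corrDistortion]
    refine iSup₂_le fun p hp => iSup₂_le fun q hq => ?_
    exact ENNReal.ofReal_le_ofReal (key p hp q hq)
  calc 2 * ghDist X Y
      = ⨅ (R : Set (X × Y)) (_ : IsCorrespondence R), corrDistortion R := by
        rw [ghDist, ENNReal.mul_div_cancel' (by norm_num) (by norm_num)]
    _ ≤ corrDistortion R := iInf₂_le R hRcorr
    _ ≤ ENNReal.ofReal (T - m) := hdist
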